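/- arXiv:math/0606203 — 4 statements merged into one kernel-verified Lean document; each statement's English description precedes it below -/
import Mathlib

section
/- Let G be a topological group and let π be a strongly continuous unitary representation of G on a complex Hilbert space H. Let (u_i) be a sequence in G converging to the identity element, let (g_i) be a sequence in G, and assume that the conjugates g_i u_i g_i^{-1} converge to an element h in G. Let v, w ∈ H and assume that π(g_i)v converges weakly to w in H. Then π(h)w = w. (This is the group-theoretic content of Lemma 1 of the paper: there, u_i = exp(tU_i) with U_i → 0 in the Lie algebra, and g_i u_i g_i^{-1} = exp(t(Ad g_i)U_i) → exp(tX) = h.) -/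
open Filter Topology

/-- **Lemma 1 (group-theoretic content).**
Let `G` be a topological group with a strongly continuous unitary representation `π`
on a complex Hilbert space `H`.  If `u i → 1` in `G`, the conjugates
`g i * u i * (g i)⁻¹` converge to `h` in `G`, and `π (g i) v` converges weakly to `w`,
then `π h w = w`. -/
theorem stmt0_weak_limit_fixed_by_conjugate_limit
    (H : Type*) [NormedAddCommGroup H] [InnerProductSpace ℂ H] [CompleteSpace H]
    (G : Type*) [Group G] [TopologicalSpace G] [IsTopologicalGroup G]
    (π : G →* (H ≃ₗᵢ[ℂ] H)) (hcont : ∀ v : H, Continuous fun g : G => π g v)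
    (u g : ℕ → G) (h : G) (v w : H)
    (hu : Tendsto u atTop (𝓝 (1 : G)))
    (hconj : Tendsto (fun i => g i * u i * (g i)⁻¹) atTop (𝓝 h))
    (hweak : ∀ x : H,
      Tendsto (fun i => @inner ℂ H _ (π (g i) v) x) atTop (𝓝 (@inner ℂ H _ w x))) :
    π h w = w := by
  -- key lemma: ⟪π k a, x⟫ = ⟪a, π k⁻¹ x⟫
  have key : ∀ (k : G) (a x : H), (inner ℂ (π k a) x : ℂ) = inner ℂ a (π k⁻¹ x) := by
    intro k a x
    have hx : π k (π k⁻¹ x) = x := by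
      rw [show π k (π k⁻¹ x) = (π k * π k⁻¹) x from rfl, ← map_mul]
      simp
    conv_lhs => rw [← hx]
    exact LinearIsometryEquiv.inner_map_map (π k) a (π k⁻¹ x)
  refine ext_inner_right ℂ fun x => ?_
  set c : ℕ → G := fun i => g i * u i * (g i)⁻¹ with hc
  set f : ℕ → ℂ := fun i => inner ℂ (π (c i) (π (g i) v)) x with hf
  -- Limit 1: f → ⟪π h w, x⟫
  have hb : Tendsto (fun i => π (c i)⁻¹ x) atTop (𝓝 (π h⁻¹ x)) :=
    ((hcont x).tendsto h⁻¹).comp hconj.inv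
  have lim1 : Tendsto f atTop (𝓝 (inner ℂ (π h w) x)) := by
    have heq : f = fun i => inner ℂ (π (g i) v) (π (c i)⁻¹ x) := by
      funext i; exact key (c i) _ x
    rw [heq, key h w x]
    have hsplit : (fun i => (inner ℂ (π (g i) v) (π (c i)⁻¹ x) : ℂ))
        = fun i => inner ℂ (π (g i) v) (π h⁻¹ x)
            + inner ℂ (π (g i) v) (π (c i)⁻¹ x - π h⁻¹ x) := by
      funext i; rw [inner_sub_right]; ring
    rw [hsplit]
    have h2 : Tendsto (fun i => (inner ℂ (π (g i) v) (π (c i)⁻¹ x - π h⁻¹ x) : ℂ))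
        atTop (𝓝 0) := by
      refine squeeze_zero_norm (a := fun i => ‖v‖ * ‖π (c i)⁻¹ x - π h⁻¹ x‖) ?_ ?_
      · intro i
        calc ‖(inner ℂ (π (g i) v) (π (c i)⁻¹ x - π h⁻¹ x) : ℂ)‖
            ≤ ‖π (g i) v‖ * ‖π (c i)⁻¹ x - π h⁻¹ x‖ := norm_inner_le_norm _ _
          _ = ‖v‖ * ‖π (c i)⁻¹ x - π h⁻¹ x‖ := by
              rw [LinearIsometryEquiv.norm_map]
      · have : Tendsto (fun i => π (c i)⁻¹ x - π h⁻¹ x) atTop (𝓝 0) := by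
          simpa using hb.sub_const (π h⁻¹ x)
        simpa using (tendsto_const_nhds (x := ‖v‖)).mul this.norm
    simpa using (hweak (π h⁻¹ x)).add h2
  -- Limit 2: f → ⟪w, x⟫
  have lim2 : Tendsto f atTop (𝓝 (inner ℂ w x)) := by
    have heq : f = fun i => inner ℂ (π (g i) v) x
        + inner ℂ (π (g i) (π (u i) v - v)) x := by
      funext i
      have h1 : π (c i) (π (g i) v) = π (g i) (π (u i) v) := by
        rw [show π (c i) (π (g i) v) = (π (c i) * π (g i)) v from rfl,
            show π (g i) (π (u i) v) = (π (g i) * π (u i)) v from rfl,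
            ← map_mul, ← map_mul]
        congr 1
        simp [hc, mul_assoc]
      rw [show f i = inner ℂ (π (c i) (π (g i) v)) x from rfl, h1, map_sub, inner_sub_left]; ring
    rw [heq]
    have h2 : Tendsto (fun i => (inner ℂ (π (g i) (π (u i) v - v)) x : ℂ))
        atTop (𝓝 0) := by
      refine squeeze_zero_norm (a := fun i => ‖π (u i) v - v‖ * ‖x‖) ?_ ?_
      · intro i
        calc ‖(inner ℂ (π (g i) (π (u i) v - v)) x : ℂ)‖
            ≤ ‖π (g i) (π (u i) v - v)‖ * ‖x‖ := norm_inner_le_norm _ _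
          _ = ‖π (u i) v - v‖ * ‖x‖ := by rw [LinearIsometryEquiv.norm_map]
      · have : Tendsto (fun i => π (u i) v - v) atTop (𝓝 0) := by
          have := ((hcont v).tendsto 1).comp hu
          simpa using this.sub (tendsto_const_nhds (x := v))
        simpa using this.norm.mul (tendsto_const_nhds (x := ‖x‖))
    simpa using (hweak x).add h2
  exact tendsto_nhds_unique lim1 lim2
end

section
/- Let 𝔤 be a finite-dimensional real Lie algebra. Let (U_i) be a sequence in 𝔤 with U_i → 0, let (φ_i) be a sequence of Lie algebra automorphisms of 𝔤, and let X ∈ 𝔤. Assume that φ_i(U_i) → X in 𝔤. Then the adjoint map ad X : 𝔤 → 𝔤, given by (ad X)(Y) = [X, Y], is a nilpotent linear endomorphism of 𝔤. (Remark 3 of the paper, with Ad g_i replaced by the Lie algebra automorphisms it induces.) -/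
open Filter Topology Polynomial

private lemma eval_matrix_charpoly {n : Type*} [Fintype n] [DecidableEq n]
    (M : Matrix n n ℝ) (t : ℝ) :
    (M.charpoly).eval t = (Matrix.scalar n t - M).det := by
  rw [Matrix.charpoly, ← coe_evalRingHom, RingHom.map_det]
  congr 1
  ext i j
  by_cases h : i = j <;>
    simp [h, Matrix.charmatrix_apply, Matrix.scalar, Matrix.diagonal, Matrix.one_apply]

private lemma ad_lieEquiv_conj {L : Type*} [LieRing L] [LieAlgebra ℝ L]
    (e : L ≃ₗ⁅ℝ⁆ L) (u : L) :
    LieAlgebra.ad ℝ L (e u) = (e.toLinearEquiv).conj (LieAlgebra.ad ℝ L u) := by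
  ext y
  simp [LinearEquiv.conj_apply, LieAlgebra.ad_apply]
  conv_lhs => rw [show y = e (e.symm y) by simp]
  rw [← LieEquiv.map_lie]
  congr 1

/-- **Remark 3.**
Let `𝔤` be a finite-dimensional real Lie algebra (with its canonical topology, pinned
down here as a Hausdorff topological vector-space topology, which is unique in finite
dimension).  If `U i → 0` in `𝔤`, the `φ i` are Lie algebra automorphisms of `𝔤`, and
`φ i (U i) → X`, then `ad X : 𝔤 → 𝔤` is a nilpotent endomorphism. -/
theorem stmt1_ad_nilpotent_of_automorphism_limit
    (L : Type*) [LieRing L] [LieAlgebra ℝ L]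
    [TopologicalSpace L] [IsTopologicalAddGroup L] [ContinuousSMul ℝ L] [T2Space L]
    [FiniteDimensional ℝ L]
    (U : ℕ → L) (hU : Tendsto U atTop (𝓝 (0 : L)))
    (φ : ℕ → (L ≃ₗ⁅ℝ⁆ L)) (X : L)
    (hlim : Tendsto (fun i => φ i (U i)) atTop (𝓝 X)) :
    IsNilpotent (LieAlgebra.ad ℝ L X) := by
  classical
  set n := Module.finrank ℝ L with hn
  let b := Module.finBasis ℝ L
  let A : L →ₗ[ℝ] Matrix (Fin n) (Fin n) ℝ :=
    (LinearMap.toMatrix b b).toLinearMap ∘ₗ (LieAlgebra.ad ℝ L : L →ₗ[ℝ] Module.End ℝ L)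
  have hAcont : Continuous A := A.continuous_of_finiteDimensional
  rw [LinearMap.isNilpotent_iff_charpoly]
  apply Polynomial.funext
  intro t
  have key : ∀ Y : L, ((LieAlgebra.ad ℝ L Y).charpoly).eval t
      = (Matrix.scalar (Fin n) t - A Y).det := by
    intro Y
    rw [← LinearMap.charpoly_toMatrix (LieAlgebra.ad ℝ L Y) b, eval_matrix_charpoly]
    rfl
  have hg : Continuous fun Y : L => (Matrix.scalar (Fin n) t - A Y).det :=
    (continuous_const.sub hAcont).matrix_det
  have h1 : Tendsto (fun i => (Matrix.scalar (Fin n) t - A (φ i (U i))).det) atTop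
      (𝓝 ((Matrix.scalar (Fin n) t - A X).det)) := (hg.tendsto X).comp hlim
  have h2 : ∀ i, (Matrix.scalar (Fin n) t - A (φ i (U i))).det
      = (Matrix.scalar (Fin n) t - A (U i)).det := by
    intro i
    rw [← key, ← key, ad_lieEquiv_conj, LinearEquiv.charpoly_conj]
  have h3 : Tendsto (fun i => (Matrix.scalar (Fin n) t - A (U i)).det) atTop
      (𝓝 ((Matrix.scalar (Fin n) t - A 0).det)) := (hg.tendsto 0).comp hU
  have heq : (Matrix.scalar (Fin n) t - A X).det = (Matrix.scalar (Fin n) t - A 0).det :=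
    tendsto_nhds_unique (h1.congr h2) h3
  rw [key X, heq]
  simp [Matrix.scalar, Matrix.det_diagonal, hn]
end

section
/- Let G be a topological group and let π be a strongly continuous unitary representation of G on a complex Hilbert space H. Let w ∈ H. Let (n_i) and (n'_i) be sequences in G each of whose terms fixes w (i.e. π(n_i)w = w and π(n'_i)w = w for all i), let (m_i) be a sequence in G converging to the identity, and assume that the products n_i m_i n'_i converge to an element a₀ of G. Then π(a₀)w = w. (The abstract content of Claim α in the proof of Proposition 6: the function f(s) = Re⟨π(s)w, w⟩ is bi-invariant under the elements fixing w, so f(a₀) = lim f(n_i m_i n'_i) = lim f(m_i) = f(1) = ‖w‖², and 2f(a₀) − 2f(1) = −‖π(a₀)w − w‖² forces π(a₀)w = w.) -/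
open Filter Topology

/-- **Claim α in the proof of Proposition 6 (abstract form).**
Let `π` be a strongly continuous unitary representation of a topological group `G` on a
complex Hilbert space `H`, and `w ∈ H`.  If `π (n i) w = w` and `π (n' i) w = w` for all
`i`, `m i → 1` in `G`, and `n i * m i * n' i → a₀`, then `π a₀ w = w`. -/
theorem stmt9_limit_of_sandwiched_products_fixes_w
    (H : Type*) [NormedAddCommGroup H] [InnerProductSpace ℂ H] [CompleteSpace H]
    (G : Type*) [Group G] [TopologicalSpace G] [IsTopologicalGroup G]
    (π : G →* (H ≃ₗᵢ[ℂ] H)) (hcont : ∀ v : H, Continuous fun g : G => π g v)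
    (w : H) (n n' m : ℕ → G) (a₀ : G)
    (hn : ∀ i, π (n i) w = w) (hn' : ∀ i, π (n' i) w = w)
    (hm : Tendsto m atTop (𝓝 (1 : G)))
    (hprod : Tendsto (fun i => n i * m i * n' i) atTop (𝓝 a₀)) :
    π a₀ w = w := by
  -- The function g ↦ ⟪π g w, w⟫ is continuous
  have hcontf : Continuous fun g : G => (inner ℂ (π g w) w : ℂ) :=
    Continuous.inner (hcont w) continuous_const
  -- value along the sandwiched sequence equals value along m
  have key : ∀ i, (inner ℂ (π (n i * m i * n' i) w) w : ℂ) = inner ℂ (π (m i) w) w := by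
    intro i
    have h1 : π (n i * m i * n' i) w = π (n i) (π (m i) w) := by
      simp [map_mul, hn' i]
    rw [h1]
    calc (inner ℂ (π (n i) (π (m i) w)) w : ℂ)
        = inner ℂ (π (n i) (π (m i) w)) (π (n i) w) := by rw [hn i]
      _ = inner ℂ (π (m i) w) w := (π (n i)).inner_map_map _ _
  -- limit of the LHS
  have lim1 : Tendsto (fun i => (inner ℂ (π (n i * m i * n' i) w) w : ℂ)) atTop
      (𝓝 (inner ℂ (π a₀ w) w)) := (hcontf.tendsto a₀).comp hprod
  -- limit of the RHS
  have lim2 : Tendsto (fun i => (inner ℂ (π (m i) w) w : ℂ)) atTop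
      (𝓝 (inner ℂ w w)) := by
    have := (hcontf.tendsto (1 : G)).comp hm
    simpa [Function.comp_def] using this
  have heq : (inner ℂ (π a₀ w) w : ℂ) = inner ℂ w w := by
    refine tendsto_nhds_unique ?_ lim2
    simpa only [key] using lim1
  -- conclude π a₀ w = w
  have hww : (inner ℂ w (π a₀ w) : ℂ) = inner ℂ w w := by
    have := congrArg (starRingEnd ℂ) heq
    rwa [inner_conj_symm, inner_conj_symm] at this
  have hxx : (inner ℂ (π a₀ w) (π a₀ w) : ℂ) = inner ℂ w w := (π a₀).inner_map_map w w
  have hzero : (inner ℂ (π a₀ w - w) (π a₀ w - w) : ℂ) = 0 := by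
    rw [inner_sub_sub_self, hxx, heq, hww]; ring
  exact sub_eq_zero.mp (inner_self_eq_zero.mp hzero)
end

section
/- Let 𝔰 be a finite-dimensional simple real Lie algebra and let T ∈ 𝔰 with T ≠ 0. Assume that ad T : 𝔰 → 𝔰 is diagonalizable over ℝ. Then the Lie subalgebra of 𝔰 generated by the image (ad T)(𝔰) is all of 𝔰. (The concluding argument of the proof of Proposition 6: with 𝔰_λ the λ-eigenspace of ad T, the subalgebra 𝔰' generated by 𝔰_* = Σ_{λ≠0} 𝔰_λ = (ad T)(𝔰) is normalized by 𝔰₀ = c_𝔰(T) and by 𝔰_*, hence is a nonzero ideal, hence equals 𝔰 by simplicity.) -/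
/-- **Concluding argument of the proof of Proposition 6.**
Let `𝔰` be a finite-dimensional simple real Lie algebra and `T ≠ 0` with
`ad T` diagonalizable over `ℝ` (the eigenspaces of `ad T` span `𝔰`).  Then the Lie
subalgebra of `𝔰` generated by the image `(ad T)(𝔰)` is all of `𝔰`. -/
theorem stmt11_span_of_ad_image_eq_top
    (L : Type*) [LieRing L] [LieAlgebra ℝ L] [Module.Finite ℝ L]
    [LieAlgebra.IsSimple ℝ L]
    (T : L) (hT : T ≠ 0)
    (hdiag : (⨆ μ : ℝ, Module.End.eigenspace (LieAlgebra.ad ℝ L T) μ) = ⊤) :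
    LieSubalgebra.lieSpan ℝ L (Set.range fun Y : L => ⁅T, Y⁆) = ⊤ := by
  set S : LieSubalgebra ℝ L := LieSubalgebra.lieSpan ℝ L (Set.range fun Y : L => ⁅T, Y⁆)
    with hSdef
  have hrange : ∀ Y : L, ⁅T, Y⁆ ∈ S := fun Y =>
    LieSubalgebra.subset_lieSpan ⟨Y, rfl⟩
  -- Every eigenvector of ad T normalizes S
  have hnorm : ∀ (μ : ℝ) (z : L), ⁅T, z⁆ = μ • z → ∀ x ∈ S, ⁅z, x⁆ ∈ S := by
    intro μ z hz
    rcases eq_or_ne μ 0 with hμ | hμ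
    · -- μ = 0 : z centralizes T, so ad z preserves the generating set
      rw [hμ, zero_smul] at hz
      have hzT : ⁅z, T⁆ = 0 := by rw [← lie_skew, hz, neg_zero]
      intro x hx
      -- consider the subalgebra {x ∈ S | ⁅z, x⁆ ∈ S}
      let K : LieSubalgebra ℝ L :=
        { carrier := {x | x ∈ S ∧ ⁅z, x⁆ ∈ S}
          add_mem' := fun ha hb => ⟨S.add_mem ha.1 hb.1, by
            rw [lie_add]; exact S.add_mem ha.2 hb.2⟩
          zero_mem' := ⟨S.zero_mem, by rw [lie_zero]; exact S.zero_mem⟩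
          smul_mem' := fun c a ha => ⟨S.smul_mem c ha.1, by
            rw [lie_smul]; exact S.smul_mem c ha.2⟩
          lie_mem' := fun {a b} ha hb => ⟨S.lie_mem ha.1 hb.1, by
            rw [leibniz_lie]
            exact S.add_mem (S.lie_mem ha.2 hb.1) (S.lie_mem ha.1 hb.2)⟩ }
      have hle : S ≤ K := by
        rw [hSdef]
        apply LieSubalgebra.lieSpan_le.mpr
        rintro _ ⟨Y, rfl⟩
        refine ⟨hrange Y, ?_⟩
        have : ⁅z, ⁅T, Y⁆⁆ = ⁅T, ⁅z, Y⁆⁆ := by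
          rw [leibniz_lie, hzT, zero_lie, zero_add]
        rw [this]
        exact hrange _
      exact (hle hx).2
    · -- μ ≠ 0 : z itself lies in S
      have hzS : z ∈ S := by
        have : z = μ⁻¹ • ⁅T, z⁆ := by rw [hz, smul_smul, inv_mul_cancel₀ hμ, one_smul]
        rw [this]
        exact S.smul_mem _ (hrange z)
      intro x hx
      exact S.lie_mem hzS hx
  -- Hence every element of L normalizes S
  have hall : ∀ (z : L) (x : L), x ∈ S → ⁅z, x⁆ ∈ S := by
    intro z
    have hz : z ∈ (⨆ μ : ℝ, Module.End.eigenspace (LieAlgebra.ad ℝ L T) μ) := by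
      rw [hdiag]; trivial
    induction hz using Submodule.iSup_induction' with
    | mem μ w hw =>
        have : ⁅T, w⁆ = μ • w := by
          have := (Module.End.mem_eigenspace_iff).mp hw
          simpa [LieAlgebra.ad_apply] using this
        exact hnorm μ w this
    | zero => intro x hx; rw [zero_lie]; exact S.zero_mem
    | add a b _ _ ha hb =>
        intro x hx
        rw [add_lie]
        exact S.add_mem (ha x hx) (hb x hx)
  -- So S is an ideal
  let I : LieIdeal ℝ L :=
    { S.toSubmodule with
      lie_mem := fun {x m} hm => hall x m hm }
  have hSI : ∀ x, x ∈ I ↔ x ∈ S := fun x => Iff.rfl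
  rcases LieAlgebra.IsSimple.eq_bot_or_eq_top I with hbot | htop
  · -- I = ⊥ is impossible: T would be central
    exfalso
    have hTc : T ∈ LieAlgebra.center ℝ L := by
      intro Y
      have : ⁅T, Y⁆ ∈ I := hrange Y
      rw [hbot, LieSubmodule.mem_bot] at this
      rw [← neg_eq_zero, lie_skew]; exact this
    rw [LieAlgebra.center_eq_bot, LieSubmodule.mem_bot] at hTc
    exact hT hTc
  · -- I = ⊤ gives S = ⊤
    rw [eq_top_iff]
    intro x _
    have : x ∈ I := by rw [htop]; trivial
    exact this
end
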